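/- In the rank-one update setting, under the generic assumptions and with ρ > 0, the secular function f(μ) = 1 + ρ Σ_{i=1}^n z_i² / (λ_i − μ) has exactly one zero in each open interval (λ_i, λ_{i+1}) for i = 1,…,n−1, and exactly one zero in the interval (λ_n, λ_n + ρ ‖z‖₂²]; moreover these n zeros are precisely the eigenvalues of L̃ = L + ρ v vᵀ. -/

import Mathlib

open Matrix Finset Filter Topology

private lemma aux_term_lt {z l μ μ' : ℝ} (hz : z ≠ 0) (h : μ < μ') (hk : l < μ ∨ μ' < l) :
    z ^ 2 / (l - μ) < z ^ 2 / (l - μ') := by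
  have hz2 : 0 < z ^ 2 := sq_pos_of_ne_zero hz
  rcases hk with hk | hk
  · have h1 : 0 < μ - l := by linarith
    have h2 : μ - l < μ' - l := by linarith
    have h3 := div_lt_div_of_pos_left hz2 h1 h2
    have e1 : z ^ 2 / (l - μ) = -(z ^ 2 / (μ - l)) := by
      rw [show l - μ = -(μ - l) by ring, div_neg]
    have e2 : z ^ 2 / (l - μ') = -(z ^ 2 / (μ' - l)) := by
      rw [show l - μ' = -(μ' - l) by ring, div_neg]
    rw [e1, e2]; linarith
  · have h1 : 0 < l - μ' := by linarith
    have h2 : l - μ' < l - μ := by linarith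
    exact div_lt_div_of_pos_left hz2 h1 h2

private lemma aux_term_le {z l μ μ' : ℝ} (hz : z ≠ 0) (h : μ ≤ μ') (hl : l < μ) :
    z ^ 2 / (l - μ) ≤ z ^ 2 / (l - μ') := by
  rcases eq_or_lt_of_le h with rfl | h
  · exact le_refl _
  · exact le_of_lt (aux_term_lt hz h (Or.inl hl))

/-- Rank-one update setting, generic assumptions, `ρ > 0`: the secular function
`f(μ) = 1 + ρ Σ_i z_i²/(λ_i - μ)` has exactly one zero in each open interval
`(λ_i, λ_{i+1})`, and exactly one zero in `(λ_n, λ_n + ρ ‖z‖₂²]`; moreover these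
zeros are precisely the eigenvalues of `L̃ = L + ρ v vᵀ`. -/
theorem secular_function_zeros
    {n : ℕ} (L U : Matrix (Fin (n + 1)) (Fin (n + 1)) ℝ)
    (lam : Fin (n + 1) → ℝ)
    (hU : Uᵀ * U = 1)
    (hLd : L = U * Matrix.diagonal lam * Uᵀ)
    (hlam : StrictMono lam)
    (ρ : ℝ) (hρ : 0 < ρ) (v : Fin (n + 1) → ℝ)
    (z : Fin (n + 1) → ℝ) (hz_def : z = Uᵀ.mulVec v)
    (hz : ∀ i, z i ≠ 0) :
    (∀ i : Fin n, ∃! μ : ℝ,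
        μ ∈ Set.Ioo (lam i.castSucc) (lam i.succ) ∧
        1 + ρ * ∑ k, z k ^ 2 / (lam k - μ) = 0) ∧
    (∃! μ : ℝ,
        μ ∈ Set.Ioc (lam (Fin.last n)) (lam (Fin.last n) + ρ * ∑ k, z k ^ 2) ∧
        1 + ρ * ∑ k, z k ^ 2 / (lam k - μ) = 0) ∧
    (∀ μ : ℝ,
        (μ ∈ (⋃ i : Fin n, Set.Ioo (lam i.castSucc) (lam i.succ)) ∪
            Set.Ioc (lam (Fin.last n)) (lam (Fin.last n) + ρ * ∑ k, z k ^ 2) ∧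
          1 + ρ * ∑ k, z k ^ 2 / (lam k - μ) = 0)
        ↔ (∃ x : Fin (n + 1) → ℝ, x ≠ 0 ∧
            (L + ρ • vecMulVec v v).mulVec x = μ • x)) := by
  classical
  set f : ℝ → ℝ := fun μ => 1 + ρ * ∑ k, z k ^ 2 / (lam k - μ) with hf
  set s : ℝ := ∑ k, z k ^ 2 with hsdef
  have hs : 0 < s :=
    Finset.sum_pos (fun k _ => sq_pos_of_ne_zero (hz k)) ⟨0, Finset.mem_univ 0⟩
  have hρs : 0 < ρ * s := mul_pos hρ hs
  -- strict monotonicity across pole-free pairs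
  have hmono : ∀ {μ μ' : ℝ}, μ < μ' → (∀ k, lam k < μ ∨ μ' < lam k) → f μ < f μ' := by
    intro μ μ' h hk
    have hsl : ∑ k, z k ^ 2 / (lam k - μ) < ∑ k, z k ^ 2 / (lam k - μ') :=
      Finset.sum_lt_sum_of_nonempty ⟨0, Finset.mem_univ 0⟩
        (fun k _ => aux_term_lt (hz k) h (hk k))
    have := mul_lt_mul_of_pos_left hsl hρ
    simp only [hf]
    linarith
  -- continuity away from poles
  have hcont : ∀ S : Set ℝ, (∀ μ ∈ S, ∀ k, lam k ≠ μ) → ContinuousOn f S := by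
    intro S hS
    apply ContinuousOn.add continuousOn_const
    apply ContinuousOn.mul continuousOn_const
    apply continuousOn_finset_sum
    intro k _
    exact ContinuousOn.div continuousOn_const (continuousOn_const.sub continuousOn_id)
      (fun μ hμ => sub_ne_zero.mpr (hS μ hμ k))
  -- the finite part of f near a pole
  have hCpart : ∀ j : Fin (n + 1), ∀ l : Filter ℝ, l ≤ 𝓝 (lam j) →
      Tendsto (fun μ => 1 + ρ * ∑ k ∈ Finset.univ.erase j, z k ^ 2 / (lam k - μ)) l
        (𝓝 (1 + ρ * ∑ k ∈ Finset.univ.erase j, z k ^ 2 / (lam k - lam j))) := by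
    intro j l hl
    apply Tendsto.mono_left ?_ hl
    apply Tendsto.const_add
    apply Tendsto.const_mul
    apply tendsto_finset_sum
    intro k hk
    have hne : lam k - lam j ≠ 0 :=
      sub_ne_zero.mpr (fun h => (Finset.mem_erase.mp hk).1 (hlam.injective h))
    exact Tendsto.div tendsto_const_nhds (tendsto_const_nhds.sub tendsto_id) hne
  have hsplit : ∀ j : Fin (n + 1), ∀ μ : ℝ,
      (1 + ρ * ∑ k ∈ Finset.univ.erase j, z k ^ 2 / (lam k - μ))
        + ρ * (z j ^ 2 / (lam j - μ)) = f μ := by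
    intro j μ
    simp only [hf]
    rw [← Finset.add_sum_erase Finset.univ (fun k => z k ^ 2 / (lam k - μ)) (Finset.mem_univ j)]
    ring
  have hbotA : ∀ j : Fin (n + 1), Tendsto f (𝓝[>] (lam j)) atBot := by
    intro j
    apply Tendsto.congr (hsplit j)
    apply Tendsto.add_atBot (hCpart j _ nhdsWithin_le_nhds)
    apply Tendsto.const_mul_atBot hρ
    have h1 : Tendsto (fun μ : ℝ => μ - lam j) (𝓝[>] (lam j)) (𝓝[>] 0) := by
      apply tendsto_nhdsWithin_of_tendsto_nhds_of_eventually_within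
      · have h0 : Tendsto (fun μ : ℝ => μ - lam j) (𝓝 (lam j)) (𝓝 (lam j - lam j)) :=
          (continuous_id.sub continuous_const).tendsto (lam j)
        rw [sub_self] at h0
        exact h0.mono_left nhdsWithin_le_nhds
      · exact eventually_mem_nhdsWithin.mono (fun x hx => Set.mem_Ioi.mpr (sub_pos.mpr (Set.mem_Ioi.mp hx)))
    have h2 : Tendsto (fun μ : ℝ => (μ - lam j)⁻¹) (𝓝[>] (lam j)) atTop :=
      tendsto_inv_nhdsGT_zero.comp h1
    have h3 : Tendsto (fun μ : ℝ => -(z j ^ 2 * (μ - lam j)⁻¹)) (𝓝[>] (lam j)) atBot :=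
      tendsto_neg_atTop_atBot.comp (Tendsto.const_mul_atTop (sq_pos_of_ne_zero (hz j)) h2)
    apply h3.congr
    intro μ
    rw [show lam j - μ = -(μ - lam j) by ring, div_neg, div_eq_mul_inv]
  have htopA : ∀ j : Fin (n + 1), Tendsto f (𝓝[<] (lam j)) atTop := by
    intro j
    apply Tendsto.congr (hsplit j)
    apply Tendsto.add_atTop (hCpart j _ nhdsWithin_le_nhds)
    apply Tendsto.const_mul_atTop hρ
    have h1 : Tendsto (fun μ : ℝ => lam j - μ) (𝓝[<] (lam j)) (𝓝[>] 0) := by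
      apply tendsto_nhdsWithin_of_tendsto_nhds_of_eventually_within
      · have h0 : Tendsto (fun μ : ℝ => lam j - μ) (𝓝 (lam j)) (𝓝 (lam j - lam j)) :=
          (continuous_const.sub continuous_id).tendsto (lam j)
        rw [sub_self] at h0
        exact h0.mono_left nhdsWithin_le_nhds
      · exact eventually_mem_nhdsWithin.mono (fun x hx => Set.mem_Ioi.mpr (sub_pos.mpr (Set.mem_Iio.mp hx)))
    have h2 : Tendsto (fun μ : ℝ => (lam j - μ)⁻¹) (𝓝[<] (lam j)) atTop :=
      tendsto_inv_nhdsGT_zero.comp h1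
    have h3 : Tendsto (fun μ : ℝ => z j ^ 2 * (lam j - μ)⁻¹) (𝓝[<] (lam j)) atTop :=
      Tendsto.const_mul_atTop (sq_pos_of_ne_zero (hz j)) h2
    apply h3.congr
    intro μ
    rw [div_eq_mul_inv]
  -- Part 1 : interior intervals
  have part1 : ∀ i : Fin n, ∃! μ : ℝ,
      μ ∈ Set.Ioo (lam i.castSucc) (lam i.succ) ∧ f μ = 0 := by
    intro i
    have hab : lam i.castSucc < lam i.succ := hlam (Fin.castSucc_lt_succ : i.castSucc < i.succ)
    have he1 : ∀ᶠ μ in 𝓝[>] (lam i.castSucc), f μ < 0 :=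
      (hbotA i.castSucc).eventually (eventually_lt_atBot 0)
    have he2 : ∀ᶠ μ in 𝓝[>] (lam i.castSucc), μ < lam i.succ :=
      (eventually_lt_nhds hab).filter_mono nhdsWithin_le_nhds
    have he3 : ∀ᶠ μ in 𝓝[>] (lam i.castSucc), lam i.castSucc < μ := eventually_mem_nhdsWithin
    obtain ⟨a', ha'f, ha'lt, ha'gt⟩ := (he1.and (he2.and he3)).exists
    have hg1 : ∀ᶠ μ in 𝓝[<] (lam i.succ), 0 < f μ :=
      (htopA i.succ).eventually (eventually_gt_atTop 0)
    have hg2 : ∀ᶠ μ in 𝓝[<] (lam i.succ), a' < μ :=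
      (eventually_gt_nhds ha'lt).filter_mono nhdsWithin_le_nhds
    have hg3 : ∀ᶠ μ in 𝓝[<] (lam i.succ), μ < lam i.succ := eventually_mem_nhdsWithin
    obtain ⟨b', hb'f, hb'gt, hb'lt⟩ := (hg1.and (hg2.and hg3)).exists
    have hnopole : ∀ μ ∈ Set.Ioo (lam i.castSucc) (lam i.succ), ∀ k, lam k ≠ μ := by
      intro μ hμ k
      rcases le_or_gt k i.castSucc with h | h
      · exact ne_of_lt (lt_of_le_of_lt (hlam.monotone h) hμ.1)
      · exact ne_of_gt (lt_of_lt_of_le hμ.2 (hlam.monotone (Fin.castSucc_lt_iff_succ_le.mp h)))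
    have hsub : Set.Icc a' b' ⊆ Set.Ioo (lam i.castSucc) (lam i.succ) :=
      fun x hx => ⟨lt_of_lt_of_le ha'gt hx.1, lt_of_le_of_lt hx.2 hb'lt⟩
    have hcont' : ContinuousOn f (Set.Icc a' b') :=
      (hcont _ hnopole).mono hsub
    have hivt := intermediate_value_Ioo (le_of_lt hb'gt) hcont'
    obtain ⟨μ₀, hμ₀mem, hμ₀⟩ := hivt ⟨ha'f, hb'f⟩
    have hμ₀mem' : μ₀ ∈ Set.Ioo (lam i.castSucc) (lam i.succ) :=
      hsub ⟨le_of_lt hμ₀mem.1, le_of_lt hμ₀mem.2⟩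
    have hlt' : ∀ μ1 μ2, μ1 ∈ Set.Ioo (lam i.castSucc) (lam i.succ) →
        μ2 ∈ Set.Ioo (lam i.castSucc) (lam i.succ) → μ1 < μ2 → f μ1 < f μ2 := by
      intro μ1 μ2 h1 h2 h12
      apply hmono h12
      intro k
      rcases le_or_gt k i.castSucc with h | h
      · exact Or.inl (lt_of_le_of_lt (hlam.monotone h) h1.1)
      · exact Or.inr (lt_of_lt_of_le h2.2 (hlam.monotone (Fin.castSucc_lt_iff_succ_le.mp h)))
    refine ⟨μ₀, ⟨hμ₀mem', hμ₀⟩, ?_⟩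
    intro μ' hμ'
    rcases lt_trichotomy μ' μ₀ with h | h | h
    · have := hlt' _ _ hμ'.1 hμ₀mem' h
      rw [hμ'.2, hμ₀] at this; exact absurd this (lt_irrefl 0)
    · exact h
    · have := hlt' _ _ hμ₀mem' hμ'.1 h
      rw [hμ'.2, hμ₀] at this; exact absurd this (lt_irrefl 0)
  -- Part 2 : last interval
  have part2 : ∃! μ : ℝ,
      μ ∈ Set.Ioc (lam (Fin.last n)) (lam (Fin.last n) + ρ * s) ∧ f μ = 0 := by
    set a : ℝ := lam (Fin.last n) with ha
    set b : ℝ := lam (Fin.last n) + ρ * s with hb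
    have hab : a < b := by rw [ha, hb]; linarith
    have hfb : 0 ≤ f b := by
      have hterm : ∀ k, -(z k ^ 2 / (ρ * s)) ≤ z k ^ 2 / (lam k - b) := by
        intro k
        have hk1 : lam k + ρ * s ≤ b := by
          rw [hb]; have := hlam.monotone (Fin.le_last k); linarith
        have h1 := aux_term_le (hz k) hk1 (by linarith)
        rw [show lam k - (lam k + ρ * s) = -(ρ * s) by ring, div_neg] at h1
        exact h1
      have hsum : -(s / (ρ * s)) ≤ ∑ k, z k ^ 2 / (lam k - b) := by
        have h2 := Finset.sum_le_sum (fun k (_ : k ∈ Finset.univ) => hterm k)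
        rwa [Finset.sum_neg_distrib, ← Finset.sum_div] at h2
      have hss : s / (ρ * s) = 1 / ρ := by
        rw [div_eq_div_iff (ne_of_gt hρs) (ne_of_gt hρ)]
        ring
      rw [hss] at hsum
      have h3 := mul_le_mul_of_nonneg_left hsum (le_of_lt hρ)
      have h4 : ρ * -(1 / ρ) = -1 := by field_simp
      simp only [hf]
      rw [h4] at h3
      linarith
    have he1 : ∀ᶠ μ in 𝓝[>] a, f μ < 0 := (hbotA (Fin.last n)).eventually (eventually_lt_atBot 0)
    have he2 : ∀ᶠ μ in 𝓝[>] a, μ < b := (eventually_lt_nhds hab).filter_mono nhdsWithin_le_nhds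
    have he3 : ∀ᶠ μ in 𝓝[>] a, a < μ := eventually_mem_nhdsWithin
    obtain ⟨a', ha'f, ha'lt, ha'gt⟩ := (he1.and (he2.and he3)).exists
    have hnopole : ∀ μ ∈ Set.Ioc a b, ∀ k, lam k ≠ μ := by
      intro μ hμ k
      exact ne_of_lt (lt_of_le_of_lt (hlam.monotone (Fin.le_last k)) hμ.1)
    have hsub : Set.Icc a' b ⊆ Set.Ioc a b :=
      fun x hx => ⟨lt_of_lt_of_le ha'gt hx.1, hx.2⟩
    have hcont' : ContinuousOn f (Set.Icc a' b) := (hcont _ hnopole).mono hsub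
    have hivt := intermediate_value_Ioc (le_of_lt ha'lt) hcont'
    obtain ⟨μ₀, hμ₀mem, hμ₀⟩ := hivt ⟨ha'f, hfb⟩
    have hμ₀mem' : μ₀ ∈ Set.Ioc a b := ⟨lt_of_lt_of_le ha'gt (le_of_lt hμ₀mem.1), hμ₀mem.2⟩
    have hlt' : ∀ μ1 μ2, μ1 ∈ Set.Ioc a b → μ2 ∈ Set.Ioc a b → μ1 < μ2 → f μ1 < f μ2 := by
      intro μ1 μ2 h1 h2 h12
      apply hmono h12
      intro k
      exact Or.inl (lt_of_le_of_lt (hlam.monotone (Fin.le_last k)) h1.1)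
    refine ⟨μ₀, ⟨hμ₀mem', hμ₀⟩, ?_⟩
    intro μ' hμ'
    rcases lt_trichotomy μ' μ₀ with h | h | h
    · have := hlt' _ _ hμ'.1 hμ₀mem' h
      rw [hμ'.2, hμ₀] at this; exact absurd this (lt_irrefl 0)
    · exact h
    · have := hlt' _ _ hμ₀mem' hμ'.1 h
      rw [hμ'.2, hμ₀] at this; exact absurd this (lt_irrefl 0)
  -- matrix preliminaries
  have hUU : U * Uᵀ = 1 := mul_eq_one_comm.mp hU
  have hvz : U.mulVec z = v := by
    rw [hz_def, Matrix.mulVec_mulVec, hUU, Matrix.one_mulVec]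
  have hvv : ∀ y : Fin (n + 1) → ℝ,
      (vecMulVec v v).mulVec y = (dotProduct v y) • v := by
    intro y
    funext i
    simp only [Matrix.mulVec, dotProduct, Matrix.vecMulVec_apply, Pi.smul_apply,
      smul_eq_mul]
    rw [Finset.sum_mul]
    exact Finset.sum_congr rfl (fun j _ => by ring)
  -- union membership implies "no pole"
  have hA : ∀ μ : ℝ,
      μ ∈ (⋃ i : Fin n, Set.Ioo (lam i.castSucc) (lam i.succ)) ∪
        Set.Ioc (lam (Fin.last n)) (lam (Fin.last n) + ρ * s) → ∀ k, lam k ≠ μ := by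
    intro μ hμ k
    rcases hμ with hμ | hμ
    · obtain ⟨i, hi⟩ := Set.mem_iUnion.mp hμ
      rcases le_or_gt k i.castSucc with h | h
      · exact ne_of_lt (lt_of_le_of_lt (hlam.monotone h) hi.1)
      · exact ne_of_gt (lt_of_lt_of_le hi.2 (hlam.monotone (Fin.castSucc_lt_iff_succ_le.mp h)))
    · exact ne_of_lt (lt_of_le_of_lt (hlam.monotone (Fin.le_last k)) hμ.1)
  -- zero of f away from poles gives eigenvector
  have hB : ∀ μ : ℝ, (∀ k, lam k ≠ μ) → f μ = 0 →
      ∃ x : Fin (n + 1) → ℝ, x ≠ 0 ∧ (L + ρ • vecMulVec v v).mulVec x = μ • x := by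
    intro μ hpol hfμ
    have hSsum : ∑ k, z k ^ 2 / (lam k - μ) = -(1 / ρ) := by
      simp only [hf] at hfμ
      field_simp
      linarith
    set w : Fin (n + 1) → ℝ := fun k => z k / (lam k - μ) with hw
    have hzw : dotProduct z w = -(1 / ρ) := by
      rw [← hSsum]
      simp only [dotProduct, hw]
      exact Finset.sum_congr rfl (fun k _ => by rw [sq]; ring)
    set x : Fin (n + 1) → ℝ := U.mulVec w with hx
    have hwne : w ≠ 0 := by
      intro h
      have h0 : w 0 = 0 := congrFun h 0
      simp only [hw] at h0
      rcases div_eq_zero_iff.mp h0 with h1 | h1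
      · exact hz 0 h1
      · exact sub_ne_zero.mpr (hpol 0) h1
    have hxne : x ≠ 0 := by
      intro h
      apply hwne
      have h1 : Uᵀ.mulVec x = w := by
        rw [hx, Matrix.mulVec_mulVec, hU, Matrix.one_mulVec]
      rw [← h1, h, Matrix.mulVec_zero]
    have hvx : dotProduct v x = -(1 / ρ) := by
      rw [hx, Matrix.dotProduct_mulVec, ← Matrix.mulVec_transpose, ← hz_def, hzw]
    have hLx : L.mulVec x = U.mulVec (fun k => lam k * w k) := by
      rw [hLd, hx, Matrix.mulVec_mulVec, Matrix.mul_assoc, hU, Matrix.mul_one,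
        ← Matrix.mulVec_mulVec,
        show Matrix.diagonal lam *ᵥ w = fun k => lam k * w k from
          funext (fun k => Matrix.mulVec_diagonal lam w k)]
    refine ⟨x, hxne, ?_⟩
    rw [Matrix.add_mulVec, hLx, Matrix.smul_mulVec, hvv x, hvx]
    have h1 : ρ • ((-(1 / ρ) : ℝ) • v) = (-1 : ℝ) • v := by
      rw [smul_smul]
      congr 1
      field_simp
    have harg : ((fun k => lam k * w k) + (-1 : ℝ) • z) = μ • w := by
      funext k
      have hd : lam k - μ ≠ 0 := sub_ne_zero.mpr (hpol k)
      simp only [Pi.add_apply, Pi.smul_apply, smul_eq_mul, hw]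
      field_simp
      ring
    rw [h1, hx, ← hvz, ← Matrix.mulVec_smul, ← Matrix.mulVec_smul,
      ← Matrix.mulVec_add, harg]
  -- eigenvector gives membership and zero of f
  have hC : ∀ μ : ℝ,
      (∃ x : Fin (n + 1) → ℝ, x ≠ 0 ∧ (L + ρ • vecMulVec v v).mulVec x = μ • x) →
      (μ ∈ (⋃ i : Fin n, Set.Ioo (lam i.castSucc) (lam i.succ)) ∪
        Set.Ioc (lam (Fin.last n)) (lam (Fin.last n) + ρ * s)) ∧ f μ = 0 := by
    rintro μ ⟨x, hxne, hxeq⟩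
    set w : Fin (n + 1) → ℝ := Uᵀ.mulVec x with hw
    have hxw : x = U.mulVec w := by
      rw [hw, Matrix.mulVec_mulVec, hUU, Matrix.one_mulVec]
    have hwne : w ≠ 0 := by
      intro h
      apply hxne
      rw [hxw, h, Matrix.mulVec_zero]
    set c : ℝ := dotProduct z w with hc
    have hvx : dotProduct v x = c := by
      rw [hxw, Matrix.dotProduct_mulVec, ← Matrix.mulVec_transpose, ← hz_def, hc]
    have e1 : Uᵀ.mulVec (L.mulVec x) = fun k => lam k * w k := by
      rw [hLd, Matrix.mulVec_mulVec, ← Matrix.mul_assoc, ← Matrix.mul_assoc, hU,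
        Matrix.one_mul, ← Matrix.mulVec_mulVec, ← hw,
        show Matrix.diagonal lam *ᵥ w = fun k => lam k * w k from
          funext (fun k => Matrix.mulVec_diagonal lam w k)]
    have e2 : Uᵀ.mulVec ((ρ • vecMulVec v v).mulVec x) = fun k => ρ * c * z k := by
      rw [Matrix.smul_mulVec, hvv x, hvx, Matrix.mulVec_smul,
        Matrix.mulVec_smul, ← hz_def]
      funext k
      simp only [Pi.smul_apply, smul_eq_mul]
      ring
    have hkey : ∀ k, lam k * w k + ρ * c * z k = μ * w k := by
      intro k
      have h := congrArg (fun y => Uᵀ.mulVec y) hxeq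
      rw [Matrix.add_mulVec, Matrix.mulVec_add, e1, e2, Matrix.mulVec_smul, ← hw] at h
      have := congrFun h k
      simp only [Pi.add_apply, Pi.smul_apply, smul_eq_mul] at this
      exact this
    have hwzero : ∀ k, lam k ≠ μ → lam k * w k = μ * w k → w k = 0 := by
      intro k hne hk
      have h2 : (lam k - μ) * w k = 0 := by rw [sub_mul, hk, sub_self]
      rcases mul_eq_zero.mp h2 with h | h
      · exact absurd (sub_eq_zero.mp h) hne
      · exact h
    have hpol : ∀ k, lam k ≠ μ := by
      intro j hj
      have hc0 : c = 0 := by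
        have hk := hkey j
        rw [hj] at hk
        have h0 : ρ * c * z j = 0 := by linarith
        rcases mul_eq_zero.mp h0 with h | h
        · rcases mul_eq_zero.mp h with h | h
          · exact absurd h (ne_of_gt hρ)
          · exact h
        · exact absurd h (hz j)
      have hwk : ∀ k, k ≠ j → w k = 0 := by
        intro k hkj
        have hk := hkey k
        rw [hc0, mul_zero, zero_mul, add_zero] at hk
        exact hwzero k (fun h => hkj (hlam.injective (h.trans hj.symm))) hk
      have hcj : c = z j * w j := by
        rw [hc]
        simp only [dotProduct]
        rw [Finset.sum_eq_single j (fun k _ hkj => by rw [hwk k hkj, mul_zero])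
          (fun h => absurd (Finset.mem_univ j) h)]
      have hwj : w j = 0 := by
        rcases mul_eq_zero.mp (hcj ▸ hc0 : z j * w j = 0) with h | h
        · exact absurd h (hz j)
        · exact h
      apply hwne
      funext k
      by_cases hkj : k = j
      · rw [hkj]; exact hwj
      · exact hwk k hkj
    have hcne : c ≠ 0 := by
      intro h0
      apply hwne
      funext k
      have hk := hkey k
      rw [h0, mul_zero, zero_mul, add_zero] at hk
      exact hwzero k (hpol k) hk
    have hwk : ∀ k, w k = -(ρ * c * z k) / (lam k - μ) := by
      intro k
      have hk := hkey k
      have hd : lam k - μ ≠ 0 := sub_ne_zero.mpr (hpol k)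
      rw [eq_div_iff hd]
      linear_combination hk
    have hcc : c = -(ρ * c) * ∑ k, z k ^ 2 / (lam k - μ) := by
      have hcc' : dotProduct z w = -(ρ * c) * ∑ k, z k ^ 2 / (lam k - μ) := by
        simp only [dotProduct]
        rw [Finset.mul_sum]
        apply Finset.sum_congr rfl
        intro k _
        rw [hwk k]
        ring
      exact hc.trans hcc'
    have hfμ0 : f μ = 0 := by
      have h4 : c * (1 + ρ * ∑ k, z k ^ 2 / (lam k - μ)) = 0 := by
        linear_combination hcc
      rcases mul_eq_zero.mp h4 with h | h
      · exact absurd h hcne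
      · exact h
    have hSval : ρ * ∑ k, z k ^ 2 / (lam k - μ) = -1 := by
      have : f μ = 0 := hfμ0
      simp only [hf] at this
      linarith
    have hlow : lam 0 < μ := by
      by_contra h
      push_neg at h
      have hμ0 : μ < lam 0 := lt_of_le_of_ne h (fun he => hpol 0 he.symm)
      have hpos : ∀ k, 0 < z k ^ 2 / (lam k - μ) := by
        intro k
        apply div_pos (sq_pos_of_ne_zero (hz k))
        exact sub_pos.mpr (lt_of_lt_of_le hμ0 (hlam.monotone (Fin.zero_le k)))
      have hsum : 0 < ∑ k, z k ^ 2 / (lam k - μ) :=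
        Finset.sum_pos (fun k _ => hpos k) ⟨0, Finset.mem_univ 0⟩
      nlinarith [hSval, mul_pos hρ hsum]
    have hupp : μ ≤ lam (Fin.last n) + ρ * s := by
      by_contra h
      push_neg at h
      have hterm : ∀ k, -(z k ^ 2 / (ρ * s)) < z k ^ 2 / (lam k - μ) := by
        intro k
        have h1 := aux_term_lt (hz k)
          (show lam k + ρ * s < μ by
            have := hlam.monotone (Fin.le_last k); linarith)
          (Or.inl (by linarith))
        rw [show lam k - (lam k + ρ * s) = -(ρ * s) by ring, div_neg] at h1
        exact h1
      have hsum2 := Finset.sum_lt_sum_of_nonempty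
        (⟨0, Finset.mem_univ 0⟩ : (Finset.univ : Finset (Fin (n + 1))).Nonempty)
        (fun k _ => hterm k)
      rw [Finset.sum_neg_distrib, ← Finset.sum_div] at hsum2
      have hss : s / (ρ * s) = 1 / ρ := by
        rw [div_eq_div_iff (ne_of_gt hρs) (ne_of_gt hρ)]
        ring
      rw [hss] at hsum2
      have h5 := mul_lt_mul_of_pos_left hsum2 hρ
      have h6 : ρ * -(1 / ρ) = -1 := by field_simp
      rw [h6] at h5
      linarith [hSval]
    have hmem : μ ∈ (⋃ i : Fin n, Set.Ioo (lam i.castSucc) (lam i.succ)) ∪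
        Set.Ioc (lam (Fin.last n)) (lam (Fin.last n) + ρ * s) := by
      rcases lt_or_ge (lam (Fin.last n)) μ with h | h
      · exact Or.inr ⟨h, hupp⟩
      · have hμlast : μ < lam (Fin.last n) := lt_of_le_of_ne h (fun he => hpol _ he.symm)
        left
        have hTne : (Finset.univ.filter (fun k => lam k < μ)).Nonempty :=
          ⟨0, Finset.mem_filter.mpr ⟨Finset.mem_univ 0, hlow⟩⟩
        obtain ⟨j, hjmem, hjmax⟩ : ∃ j, lam j < μ ∧ ∀ k, lam k < μ → k ≤ j := by
          refine ⟨(Finset.univ.filter (fun k => lam k < μ)).max' hTne, ?_, ?_⟩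
          · exact (Finset.mem_filter.mp (Finset.max'_mem _ hTne)).2
          · intro k hk
            exact Finset.le_max' _ k (Finset.mem_filter.mpr ⟨Finset.mem_univ k, hk⟩)
        have hjne : j ≠ Fin.last n := by
          intro h'
          rw [h'] at hjmem
          exact absurd hjmem (not_lt.mpr (le_of_lt hμlast))
        obtain ⟨i, hi⟩ := Fin.exists_castSucc_eq.mpr hjne
        refine Set.mem_iUnion.mpr ⟨i, ⟨?_, ?_⟩⟩
        · rw [hi]; exact hjmem
        · by_contra h2
          push_neg at h2
          have h3 : lam i.succ < μ := lt_of_le_of_ne h2 (hpol i.succ)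
          have h5 := hjmax i.succ h3
          rw [← hi] at h5
          exact absurd h5 (not_le.mpr (Fin.castSucc_lt_succ : i.castSucc < i.succ))
    exact ⟨hmem, hfμ0⟩
  refine ⟨part1, part2, ?_⟩
  intro μ
  constructor
  · rintro ⟨hmem, hfeq⟩
    exact hB μ (hA μ hmem) hfeq
  · intro hex
    exact hC μ hex
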